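/- arXiv:2111.00055 — 3 statements merged into one kernel-verified Lean document; each statement's English description precedes it below -/
import Mathlib

section
/- Let α > 0 and let u : (0,∞) → ℝ be continuously differentiable with compact support. Viewing u as a radial function on ℝ², there exists a constant C̃ > 0, independent of u, such that for all r ≥ 1, |u(r)| ≤ (C̃ / r^{(α+2)/4}) · (‖∇u‖_{L²(ℝ²)}² + ∫_{ℝ²}(1+|x|^α)u(|x|)² dx)^{1/2}. -/
/-!
Since `u` has compact support, `u(r)² = ∫_r^∞ -2 u u' ds`. For `s ≥ r` we have
`r^{α+2} ≤ s^α · s · s`, so AM–GM with the weights `s^α · s` and `s` gives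
`-2 u u' · r^{(α+2)/2} ≤ u'² s + s^α u² s`, and integrating over `(r, ∞)` bounds
`u(r)² r^{(α+2)/2}` by the weighted energy; the constant is `C = (2π)^{-1/2}`.
-/

open MeasureTheory Set

theorem HasCompactSupport.sq {X M : Type*} [TopologicalSpace X] [MonoidWithZero M] {f : X → M}
    (hf : HasCompactSupport f) : HasCompactSupport (fun x => f x ^ 2) :=
  hf.comp_left (g := (· ^ 2)) (zero_pow two_ne_zero)

theorem two_mul_mul_mul_le_of_sq_le_mul {x y w P Q : ℝ} (hP : 0 ≤ P) (hQ : 0 ≤ Q) (hw : 0 ≤ w)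
    (hwPQ : w ^ 2 ≤ P * Q) : 2 * x * y * w ≤ x ^ 2 * P + y ^ 2 * Q := by
  rcases hP.eq_or_lt with rfl | hP
  · obtain rfl : w = 0 := by nlinarith
    nlinarith [sq_nonneg y]
  · refine le_of_mul_le_mul_left ?_ hP
    nlinarith [sq_nonneg (x * P - y * w), sq_nonneg y]

theorem neg_two_mul_mul_rpow_le {α r s : ℝ} (hα : 0 ≤ α) (hr : 0 < r) (hrs : r ≤ s) (a b : ℝ) :
    -(2 * a * b) * r ^ ((α + 2) / 2) ≤ b ^ 2 * s + (1 + s ^ α) * a ^ 2 * s := by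
  have hs : 0 < s := hr.trans_le hrs
  have hw : (r ^ ((α + 2) / 2)) ^ 2 ≤ s ^ α * s * s := by
    rw [← Real.rpow_two, ← Real.rpow_mul hr.le, div_mul_cancel₀ _ two_ne_zero, mul_assoc, ← sq,
      ← Real.rpow_two, ← Real.rpow_add hs]
    exact Real.rpow_le_rpow hr.le hrs (by positivity)
  have hamgm := two_mul_mul_mul_le_of_sq_le_mul (x := a) (y := -b) (by positivity) hs.le
    (by positivity) hw
  nlinarith [sq_nonneg a]

theorem integral_Ioi_neg_two_mul_deriv_eq_sq {u : ℝ → ℝ} (hu : ContDiff ℝ 1 u)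
    (hsupp : HasCompactSupport u) (r : ℝ) :
    ∫ s in Ioi r, -(2 * u s * deriv u s) = u r ^ 2 := by
  have hderiv (s : ℝ) : deriv (fun s => u s ^ 2) s = 2 * u s * deriv u s := by
    simp [hu.differentiable one_ne_zero s]
  rw [integral_neg, neg_eq_iff_eq_neg, ← hsupp.sq.integral_Ioi_deriv_eq (hu.pow 2) r]
  simp only [hderiv]

theorem sq_mul_rpow_le_weighted_energy {α r : ℝ} (hα : 0 ≤ α) (hr : 0 < r) {u : ℝ → ℝ}
    (hu : ContDiff ℝ 1 u) (hsupp : HasCompactSupport u) :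
    u r ^ 2 * r ^ ((α + 2) / 2) ≤
      (∫ s in Ioi 0, deriv u s ^ 2 * s) + ∫ s in Ioi 0, (1 + s ^ α) * u s ^ 2 * s := by
  have := Real.continuous_rpow_const hα
  have := hu.continuous
  have := hu.continuous_deriv le_rfl
  have hint_deriv : Integrable (fun s => deriv u s ^ 2 * s) :=
    Continuous.integrable_of_hasCompactSupport (by fun_prop) hsupp.deriv.sq.mul_right
  have hint_weight : Integrable (fun s => (1 + s ^ α) * u s ^ 2 * s) :=
    Continuous.integrable_of_hasCompactSupport (by fun_prop) hsupp.sq.mul_left.mul_right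
  have hint_lhs : Integrable (fun s => -(2 * u s * deriv u s)) :=
    Continuous.integrable_of_hasCompactSupport (by fun_prop) hsupp.mul_left.mul_right.neg
  calc u r ^ 2 * r ^ ((α + 2) / 2)
      = ∫ s in Ioi r, -(2 * u s * deriv u s) * r ^ ((α + 2) / 2) := by
        rw [integral_mul_const, integral_Ioi_neg_two_mul_deriv_eq_sq hu hsupp]
    _ ≤ ∫ s in Ioi r, (deriv u s ^ 2 * s + (1 + s ^ α) * u s ^ 2 * s) :=
        setIntegral_mono_on (hint_lhs.mul_const _).integrableOn
          (hint_deriv.add hint_weight).integrableOn measurableSet_Ioi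
          fun s hs => neg_two_mul_mul_rpow_le hα hr (le_of_lt hs) _ _
    _ ≤ ∫ s in Ioi 0, (deriv u s ^ 2 * s + (1 + s ^ α) * u s ^ 2 * s) := by
        refine setIntegral_mono_set (hint_deriv.add hint_weight).integrableOn ?_
          (Ioi_subset_Ioi hr.le).eventuallyLE
        filter_upwards [self_mem_ae_restrict measurableSet_Ioi] with s (hs : 0 < s)
        positivity
    _ = _ := integral_add hint_deriv.integrableOn hint_weight.integrableOn

theorem stmt4 (α : ℝ) (hα : 0 < α) :
    ∃ C > 0, ∀ u : ℝ → ℝ, ContDiff ℝ 1 u → HasCompactSupport u →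
      ∀ r : ℝ, 1 ≤ r →
        |u r| ≤ (C / r ^ ((α + 2) / 4)) *
          Real.sqrt ((2 * Real.pi * ∫ s in Set.Ioi (0:ℝ), (deriv u s) ^ 2 * s)
            + 2 * Real.pi * ∫ s in Set.Ioi (0:ℝ), (1 + s ^ α) * u s ^ 2 * s) := by
  refine ⟨1 / √(2 * Real.pi), by positivity, fun u hu hsupp r hr => ?_⟩
  have hr0 : 0 < r := one_pos.trans_le hr
  rw [← mul_add, Real.sqrt_mul Real.two_pi_pos.le]
  set E := (∫ s in Ioi 0, deriv u s ^ 2 * s) + ∫ s in Ioi 0, (1 + s ^ α) * u s ^ 2 * s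
  have hsqrt_rpow : √(r ^ ((α + 2) / 2)) = r ^ ((α + 2) / 4) := by
    rw [Real.sqrt_eq_rpow, ← Real.rpow_mul hr0.le]
    ring_nf
  have hbound : |u r| * r ^ ((α + 2) / 4) ≤ √E := by
    rw [← Real.sqrt_sq_eq_abs, ← hsqrt_rpow, ← Real.sqrt_mul (sq_nonneg _)]
    exact Real.sqrt_le_sqrt (sq_mul_rpow_le_weighted_energy hα.le hr0 hu hsupp)
  calc |u r| ≤ √E / r ^ ((α + 2) / 4) := (le_div_iff₀ (by positivity)).2 hbound
    _ = _ := by field_simp [(Real.sqrt_pos.2 Real.two_pi_pos).ne']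
end

section
/- Let p > 4, α > 0, C_ε > 0 and let β > 2 be such that 4 < 4(β-1)/(β-2) < p. Define f : [0,∞) → ℝ by f(s) = (1/4)s² − C_ε s^{4(β-1)/(β-2)} + (1/p)s^p, and suppose min_{s≥0} f(s) < 0. Then the set N = {s > 0 : f(s) < 0} is a bounded open interval (γ, δ) with γ > 0. -/
theorem stmt6 (p α Cε β : ℝ) (hp : 4 < p) (hα : 0 < α) (hC : 0 < Cε)
    (hβ : 2 < β) (h1 : 4 < 4 * (β - 1) / (β - 2)) (h2 : 4 * (β - 1) / (β - 2) < p)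
    (f : ℝ → ℝ)
    (hf : ∀ s : ℝ, f s = (1/4) * s ^ 2 - Cε * s ^ (4 * (β - 1) / (β - 2)) + (1/p) * s ^ p)
    (hmin : ∃ s ≥ (0:ℝ), f s < 0) :
    ∃ γ δ : ℝ, 0 < γ ∧ γ < δ ∧ {s : ℝ | 0 < s ∧ f s < 0} = Set.Ioo γ δ := by
  obtain ⟨s₀, hs₀0, hs₀⟩ := hmin
  set q : ℝ := 4 * (β - 1) / (β - 2) with hqdef
  have hq4 : 4 < q := h1
  have hq2 : 2 < q := by linarith
  have hqp : q < p := h2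
  have hp0 : (0:ℝ) < p := by linarith
  set H : ℝ → ℝ := fun t => (1/4) * Real.exp ((2-q)*t) - Cε + (1/p) * Real.exp ((p-q)*t)
    with hHdef
  have key : ∀ s : ℝ, 0 < s → f s = s ^ q * H (Real.log s) := by
    intro s hs
    have e1 : s ^ q * Real.exp ((2-q) * Real.log s) = s ^ (2:ℕ) := by
      rw [mul_comm (2-q), ← Real.rpow_def_of_pos hs, ← Real.rpow_add hs]
      rw [show q + (2 - q) = ((2:ℕ):ℝ) by push_cast; ring, Real.rpow_natCast]
    have e2 : s ^ q * Real.exp ((p-q) * Real.log s) = s ^ p := by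
      rw [mul_comm (p-q), ← Real.rpow_def_of_pos hs, ← Real.rpow_add hs]
      ring_nf
    have expand : s ^ q * H (Real.log s) =
        (1/4) * (s ^ q * Real.exp ((2-q) * Real.log s)) - Cε * s ^ q
          + (1/p) * (s ^ q * Real.exp ((p-q) * Real.log s)) := by
      simp only [hHdef]; ring
    rw [expand, e1, e2, hf]
  have hT_iff : ∀ s : ℝ, 0 < s → (f s < 0 ↔ H (Real.log s) < 0) := by
    intro s hs
    rw [key s hs]
    constructor
    · intro h
      by_contra h'
      push_neg at h'
      exact absurd h (not_lt.2 (mul_nonneg (Real.rpow_pos_of_pos hs q).le h'))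
    · intro h
      exact mul_neg_of_pos_of_neg (Real.rpow_pos_of_pos hs q) h
  -- convexity of H
  have expconv : ∀ c a b u v : ℝ, 0 ≤ u → 0 ≤ v → u + v = 1 →
      Real.exp (c * (u*a + v*b)) ≤ u * Real.exp (c*a) + v * Real.exp (c*b) := by
    intro c a b u v hu hv huv
    have h := convexOn_exp.2 (Set.mem_univ (c*a)) (Set.mem_univ (c*b)) hu hv huv
    simp only [smul_eq_mul] at h
    calc Real.exp (c*(u*a + v*b)) = Real.exp (u*(c*a) + v*(c*b)) := by
          rw [show c*(u*a + v*b) = u*(c*a) + v*(c*b) from by ring]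
      _ ≤ u * Real.exp (c*a) + v * Real.exp (c*b) := h
  have hHconv : ConvexOn ℝ Set.univ H := by
    refine ⟨convex_univ, fun a _ b _ u v hu hv huv => ?_⟩
    simp only [hHdef, smul_eq_mul]
    have E1 := expconv (2-q) a b u v hu hv huv
    have E2 := expconv (p-q) a b u v hu hv huv
    have h4 : (0:ℝ) < 1/4 := by norm_num
    have hpinv : (0:ℝ) < 1/p := by positivity
    nlinarith [E1, E2]
  set T : Set ℝ := {t | H t < 0} with hTdef
  have hTconv : Convex ℝ T := by
    have := hHconv.convex_lt 0
    simpa using this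
  have hTopen : IsOpen T := by
    have hc : Continuous H := by fun_prop
    exact isOpen_lt hc continuous_const
  -- nonempty
  have hf0 : f 0 = 0 := by
    rw [hf 0, Real.zero_rpow (by positivity : (0:ℝ) < q).ne',
      Real.zero_rpow hp0.ne']
    norm_num
  have hs₀pos : 0 < s₀ := by
    rcases lt_or_eq_of_le hs₀0 with h | h
    · exact h
    · exfalso; rw [← h, hf0] at hs₀; exact lt_irrefl 0 hs₀
  have ht₀ : Real.log s₀ ∈ T := (hT_iff s₀ hs₀pos).mp hs₀
  have hTne : T.Nonempty := ⟨Real.log s₀, ht₀⟩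
  -- bounded above
  have hbddA : BddAbove T := by
    refine ⟨Real.log (p*Cε) / (p-q), fun t ht => ?_⟩
    simp only [hTdef, hHdef, Set.mem_setOf_eq] at ht
    have h1' : (0:ℝ) < (1/4) * Real.exp ((2-q)*t) := by positivity
    have h2' : (1/p) * Real.exp ((p-q)*t) < Cε := by linarith
    have h3' : Real.exp ((p-q)*t) < p * Cε := by
      have := mul_lt_mul_of_pos_left h2' hp0
      rwa [← mul_assoc, mul_one_div_cancel hp0.ne', one_mul] at this
    have hpc : 0 < p * Cε := mul_pos hp0 hC
    have h4' : (p-q)*t < Real.log (p*Cε) :=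
      Real.exp_lt_exp.mp (by rw [Real.exp_log hpc]; exact h3')
    rw [le_div_iff₀ (by linarith : (0:ℝ) < p - q)]
    linarith
  -- bounded below
  have hbddB : BddBelow T := by
    refine ⟨Real.log (4*Cε) / (2-q), fun t ht => ?_⟩
    simp only [hTdef, hHdef, Set.mem_setOf_eq] at ht
    have h1' : (0:ℝ) < (1/p) * Real.exp ((p-q)*t) := by positivity
    have h2' : (1/4) * Real.exp ((2-q)*t) < Cε := by linarith
    have h3' : Real.exp ((2-q)*t) < 4 * Cε := by linarith
    have hpc : 0 < 4 * Cε := by linarith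
    have h4' : (2-q)*t < Real.log (4*Cε) :=
      Real.exp_lt_exp.mp (by rw [Real.exp_log hpc]; exact h3')
    rw [div_le_iff_of_neg (by linarith : (2:ℝ) - q < 0)]
    linarith
  -- every element of T is strictly between inf and sup
  have hmemlt : ∀ t ∈ T, sInf T < t ∧ t < sSup T := by
    intro t ht
    obtain ⟨ε, hε, hball⟩ := Metric.isOpen_iff.mp hTopen t ht
    rw [Real.ball_eq_Ioo] at hball
    have hl : t - ε/2 ∈ T := hball ⟨by linarith, by linarith⟩
    have hr : t + ε/2 ∈ T := hball ⟨by linarith, by linarith⟩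
    exact ⟨lt_of_le_of_lt (csInf_le hbddB hl) (by linarith),
           lt_of_lt_of_le (by linarith) (le_csSup hbddA hr)⟩
  have hOrd := hTconv.ordConnected
  refine ⟨Real.exp (sInf T), Real.exp (sSup T), Real.exp_pos _, Real.exp_lt_exp.mpr ?_, ?_⟩
  · obtain ⟨ha, hb⟩ := hmemlt _ ht₀; linarith
  · ext s
    simp only [Set.mem_setOf_eq, Set.mem_Ioo]
    constructor
    · rintro ⟨hs, hfs⟩
      have hHlt : Real.log s ∈ T := (hT_iff s hs).mp hfs
      obtain ⟨hl, hr⟩ := hmemlt _ hHlt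
      constructor
      · have := Real.exp_lt_exp.mpr hl
        rwa [Real.exp_log hs] at this
      · have := Real.exp_lt_exp.mpr hr
        rwa [Real.exp_log hs] at this
    · rintro ⟨hl, hr⟩
      have hs : 0 < s := lt_trans (Real.exp_pos _) hl
      have hl' : sInf T < Real.log s := (Real.lt_log_iff_exp_lt hs).mpr hl
      have hr' : Real.log s < sSup T := (Real.log_lt_iff_lt_exp hs).mpr hr
      obtain ⟨a, ha, ha'⟩ := exists_lt_of_csInf_lt hTne hl'
      obtain ⟨b, hb, hb'⟩ := exists_lt_of_lt_csSup hTne hr'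
      have hmem : Real.log s ∈ T := hOrd.out ha hb ⟨ha'.le, hb'.le⟩
      exact ⟨hs, (hT_iff s hs).mpr hmem⟩
end

section
/- Let α > 0, r > (α−2)/2, p > 2, q > 0 and w a nonzero smooth compactly supported function on ℝ². Set w_t(x) = t^r w(x/t). Then J_α(w_t) = (t^{2r}/2)‖∇w‖₂² + (t^{2r+2}/2)∫(1 + t^α|x|^α)w² dx − (t^{4r+4} log t)/(8π) ‖w‖₂⁴ − (t^{4r+4}/4)V₀(w) − (t^{pr+2}/p)‖w‖_p^p, and J_α(w_t) → −∞ as t → +∞. -/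
open MeasureTheory Metric Set
open scoped ENNReal NNReal

noncomputable def V₀ (v : EuclideanSpace ℝ (Fin 2) → ℝ) : ℝ :=
  (1 / (2 * Real.pi)) * ∫ x, ∫ y, Real.log ‖x - y‖ * v x ^ 2 * v y ^ 2

namespace Stmt15Aux

abbrev E2 := EuclideanSpace ℝ (Fin 2)

lemma logIntOn' (S : ℝ) (hS : 1 ≤ S) :
    IntegrableOn (fun z : E2 => Real.log ‖z‖) (closedBall 0 S) := by
  have hmeas : AEStronglyMeasurable (fun z : E2 => Real.log ‖z‖) volume :=
    (Real.measurable_log.comp measurable_norm).aestronglyMeasurable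
  have h1 : IntegrableOn (fun z : E2 => Real.log ‖z‖) (closedBall 0 S \ ball 0 1) := by
    apply Measure.integrableOn_of_bounded (M := Real.log S)
      (((measure_mono (diff_subset)).trans_lt measure_closedBall_lt_top).ne) hmeas
    filter_upwards [ae_restrict_mem ((measurableSet_closedBall).diff measurableSet_ball)]
      with z hz
    obtain ⟨hz1, hz2⟩ := hz
    simp only [mem_closedBall, mem_ball, dist_zero_right, not_lt] at hz1 hz2
    rw [Real.norm_eq_abs, abs_of_nonneg (Real.log_nonneg hz2)]
    exact Real.log_le_log (lt_of_lt_of_le one_pos hz2) hz1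
  have h2 : IntegrableOn (fun z : E2 => Real.log ‖z‖) (ball 0 1) := by
    refine ⟨hmeas.restrict, ?_⟩
    rw [HasFiniteIntegral]
    set A : ℕ → Set E2 := fun n => norm ⁻¹' (Ico ((1/2:ℝ)^(n+1)) ((1/2:ℝ)^n)) with hA
    have hAmeas : ∀ n, MeasurableSet (A n) := fun n => measurable_norm measurableSet_Ico
    have hcover : ball (0:E2) 1 \ {0} ⊆ ⋃ n, A n := by
      intro z hz
      obtain ⟨hz1, hz0⟩ := hz
      simp only [mem_ball, dist_zero_right] at hz1
      have hzpos : 0 < ‖z‖ := norm_pos_iff.2 (by simpa using hz0)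
      have hex : ∃ n : ℕ, (1/2:ℝ)^(n+1) ≤ ‖z‖ := by
        obtain ⟨n, hn⟩ := exists_pow_lt_of_lt_one hzpos (by norm_num : (1/2:ℝ) < 1)
        exact ⟨n, by rw [pow_succ]; nlinarith [pow_pos (by norm_num : (0:ℝ)<1/2) n]⟩
      classical
      set n := Nat.find hex with hn
      refine mem_iUnion.2 ⟨n, Nat.find_spec hex, ?_⟩
      rcases Nat.eq_zero_or_pos n with h0 | hpos
      · simpa [h0] using hz1
      · have := Nat.find_min hex (m := n - 1) (by omega)
        push_neg at this
        have : ‖z‖ < (1/2:ℝ) ^ (n - 1 + 1) := this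
        simpa [Nat.sub_add_cancel hpos] using this
    have hV : volume (ball (0:E2) 1) < ⊤ := measure_ball_lt_top
    calc ∫⁻ z in ball (0:E2) 1, ‖Real.log ‖z‖‖₊
        = ∫⁻ z in ball (0:E2) 1 \ {0}, ‖Real.log ‖z‖‖₊ := by
          exact (setLIntegral_congr
            (MeasureTheory.diff_null_ae_eq_self (measure_singleton 0)).symm)
      _ ≤ ∫⁻ z in ⋃ n, A n, ‖Real.log ‖z‖‖₊ := lintegral_mono_set hcover
      _ ≤ ∑' n, ∫⁻ z in A n, ‖Real.log ‖z‖‖₊ := lintegral_iUnion_le _ _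
      _ ≤ ∑' n, ENNReal.ofReal (Real.log 2) * ENNReal.ofReal ((1/2:ℝ)^n)
            * volume (ball (0:E2) 1) := by
          refine ENNReal.tsum_le_tsum fun n => ?_
          have hb : ∀ z ∈ A n, ((nnnorm (Real.log ‖z‖)) : ℝ≥0∞)
              ≤ ENNReal.ofReal ((n+1) * Real.log 2) := by
            intro z hz
            obtain ⟨hz1, hz2⟩ := hz
            have hz2' : ‖z‖ < 1 :=
              hz2.trans_le (pow_le_one₀ (by norm_num) (by norm_num))
            have hzpos : (0:ℝ) < ‖z‖ := lt_of_lt_of_le (pow_pos (by norm_num) _) hz1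
            rw [show ((nnnorm (Real.log ‖z‖)) : ℝ≥0∞) = ENNReal.ofReal |Real.log ‖z‖| from Real.enorm_eq_ofReal_abs _]
            apply ENNReal.ofReal_le_ofReal
            rw [abs_of_nonpos (Real.log_nonpos hzpos.le hz2'.le)]
            have := Real.log_le_log hzpos hz2.le  -- log‖z‖ ≤ log((1/2)^n)?? need lower bound
            have hlow : Real.log ((1/2:ℝ)^(n+1)) ≤ Real.log ‖z‖ :=
              Real.log_le_log (pow_pos (by norm_num) _) hz1
            have : Real.log ((1/2:ℝ)^(n+1)) = -((n+1) * Real.log 2) := by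
              rw [Real.log_pow]
              push_cast
              rw [Real.log_div one_ne_zero two_ne_zero, Real.log_one]
              ring
            linarith [hlow, this ▸ hlow]
          calc ∫⁻ z in A n, ‖Real.log ‖z‖‖₊
              ≤ ∫⁻ _ in A n, ENNReal.ofReal ((n+1) * Real.log 2) :=
                setLIntegral_mono' (hAmeas n) hb
            _ = ENNReal.ofReal ((n+1) * Real.log 2) * volume (A n) :=
                setLIntegral_const _ _
            _ ≤ ENNReal.ofReal ((n+1) * Real.log 2)
                  * (ENNReal.ofReal (((1/2:ℝ)^n) ^ Module.finrank ℝ E2)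
                    * volume (ball (0:E2) 1)) := by
                gcongr
                rw [← Measure.addHaar_ball (volume : Measure E2) 0
                  (pow_nonneg (by norm_num) n)]
                apply measure_mono
                intro z hz
                simp only [mem_ball, dist_zero_right]
                exact hz.2
            _ ≤ ENNReal.ofReal (Real.log 2) * ENNReal.ofReal ((1/2:ℝ)^n)
                  * volume (ball (0:E2) 1) := by
                rw [← mul_assoc]
                refine mul_le_mul_left ?_ _
                have hlog2' : (0:ℝ) ≤ Real.log 2 := Real.log_nonneg one_le_two
                rw [← ENNReal.ofReal_mul (mul_nonneg (by positivity) hlog2'),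
                  ← ENNReal.ofReal_mul hlog2']
                apply ENNReal.ofReal_le_ofReal
                rw [finrank_euclideanSpace_fin]
                have h2n : ((n:ℝ)+1) ≤ 2^n := by
                  exact_mod_cast Nat.succ_le_of_lt (Nat.lt_two_pow_self (n := n))
                have hlog2 : (0:ℝ) ≤ Real.log 2 := Real.log_nonneg one_le_two
                have key : ((n:ℝ)+1) * (((1/2:ℝ)^n)^2) ≤ (1/2:ℝ)^n := by
                  have e : (2:ℝ)^n * (((1/2:ℝ)^n)^2) = (1/2:ℝ)^n := by
                    rw [pow_two, ← mul_assoc, ← mul_pow]; norm_num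
                  calc ((n:ℝ)+1) * (((1/2:ℝ)^n)^2)
                      ≤ (2:ℝ)^n * (((1/2:ℝ)^n)^2) :=
                        mul_le_mul_of_nonneg_right h2n (by positivity)
                    _ = (1/2:ℝ)^n := e
                nlinarith [key, hlog2, pow_nonneg (by norm_num : (0:ℝ) ≤ 1/2) n,
                  sq_nonneg ((1/2:ℝ)^n)]
      _ < ⊤ := by
          rw [ENNReal.tsum_mul_right, ENNReal.tsum_mul_left]
          have : ∑' n:ℕ, ENNReal.ofReal ((1/2:ℝ)^n) < ⊤ := by
            have : ∀ n:ℕ, ENNReal.ofReal ((1/2:ℝ)^n) = (ENNReal.ofReal (1/2))^n :=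
              fun n => by rw [ENNReal.ofReal_pow (by norm_num)]
            rw [tsum_congr this, ENNReal.tsum_geometric]
            rw [ENNReal.inv_lt_top, tsub_pos_iff_lt]
            exact ENNReal.ofReal_lt_one.2 (by norm_num)
          exact ENNReal.mul_lt_top (ENNReal.mul_lt_top ENNReal.ofReal_lt_top this) hV
  have : closedBall (0:E2) S = (closedBall 0 S \ ball 0 1) ∪ ball 0 1 := by
    rw [diff_union_self, union_eq_self_of_subset_right (ball_subset_closedBall.trans
      (closedBall_subset_closedBall hS))]
  rw [this]
  exact h1.union h2

lemma logIntOn (R : ℝ) : IntegrableOn (fun z : E2 => Real.log ‖z‖) (closedBall 0 R) :=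
  (logIntOn' (max R 1) (le_max_right _ _)).mono_set
    (closedBall_subset_closedBall (le_max_left _ _))

noncomputable def Ilog (ρ : ℝ) : ℝ := ∫ z in closedBall (0:E2) ρ, |Real.log ‖z‖|

lemma Ilog_nonneg (ρ : ℝ) : 0 ≤ Ilog ρ :=
  integral_nonneg (fun z => abs_nonneg _)

lemma Ilog_mono {ρ ρ' : ℝ} (h : ρ ≤ ρ') : Ilog ρ ≤ Ilog ρ' := by
  apply setIntegral_mono_set ((logIntOn ρ').abs)
  · filter_upwards with z using abs_nonneg _
  · exact HasSubset.Subset.eventuallyLE (closedBall_subset_closedBall h)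

lemma FF_integrable (ρ : ℝ) :
    Integrable (Set.indicator (closedBall (0:E2) ρ) (fun z => |Real.log ‖z‖|)) :=
  IntegrableOn.integrable_indicator ((logIntOn ρ).abs) measurableSet_closedBall

lemma log_mul_integrable {g : E2 → ℝ} (hg : Continuous g) (hgs : HasCompactSupport g)
    {R C : ℝ} (hR : tsupport g ⊆ closedBall 0 R) (hC : ∀ y, |g y| ≤ C) (x : E2) :
    Integrable (fun y => Real.log ‖x - y‖ * g y) := by
  set F := Set.indicator (closedBall (0:E2) (‖x‖ + R)) (fun z => |Real.log ‖z‖|) with hF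
  have hFnonneg : ∀ z, 0 ≤ F z := fun z => Set.indicator_nonneg (fun _ _ => abs_nonneg _) z
  have hC0 : 0 ≤ C := le_trans (abs_nonneg _) (hC 0)
  have hGint : Integrable (fun y => C * F (x - y)) :=
    (((FF_integrable (‖x‖ + R)).comp_sub_left x)).const_mul C
  refine hGint.mono' ?_ ?_
  · exact ((Real.measurable_log.comp ((measurable_const.sub measurable_id).norm)).mul
      hg.measurable).aestronglyMeasurable
  · filter_upwards with y
    rw [Real.norm_eq_abs, abs_mul]
    by_cases hy : y ∈ tsupport g
    · have h1 : ‖x - y‖ ≤ ‖x‖ + R := by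
        have := mem_closedBall.1 (hR hy)
        rw [dist_zero_right] at this
        calc ‖x - y‖ ≤ ‖x‖ + ‖y‖ := norm_sub_le _ _
          _ ≤ ‖x‖ + R := by linarith
      have : F (x - y) = |Real.log ‖x - y‖| := by
        rw [hF, Set.indicator_of_mem (by simpa [mem_closedBall, dist_zero_right] using h1)]
      rw [this]
      calc |Real.log ‖x - y‖| * |g y| ≤ |Real.log ‖x - y‖| * C :=
            mul_le_mul_of_nonneg_left (hC y) (abs_nonneg _)
        _ = C * |Real.log ‖x - y‖| := mul_comm _ _
    · rw [image_eq_zero_of_notMem_tsupport hy]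
      simpa using mul_nonneg hC0 (hFnonneg (x - y))

lemma log_mul_bound {g : E2 → ℝ} (hg : Continuous g) (hgs : HasCompactSupport g)
    {R C : ℝ} (hR : tsupport g ⊆ closedBall 0 R) (hC : ∀ y, |g y| ≤ C) (x : E2) :
    |∫ y, Real.log ‖x - y‖ * g y| ≤ C * Ilog (‖x‖ + R) := by
  set F := Set.indicator (closedBall (0:E2) (‖x‖ + R)) (fun z => |Real.log ‖z‖|) with hF
  have hC0 : 0 ≤ C := le_trans (abs_nonneg _) (hC 0)
  have hGint : Integrable (fun y => C * F (x - y)) :=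
    (((FF_integrable (‖x‖ + R)).comp_sub_left x)).const_mul C
  calc |∫ y, Real.log ‖x - y‖ * g y| ≤ ∫ y, |Real.log ‖x - y‖ * g y| := by
        have := norm_integral_le_integral_norm (μ := volume)
          (fun y => Real.log ‖x - y‖ * g y)
        simpa only [Real.norm_eq_abs] using this
    _ ≤ ∫ y, C * F (x - y) := by
        apply integral_mono ((log_mul_integrable hg hgs hR hC x).abs) hGint
        intro y
        dsimp only
        by_cases hy : y ∈ tsupport g
        · have h1 : ‖x - y‖ ≤ ‖x‖ + R := by
            have := mem_closedBall.1 (hR hy)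
            rw [dist_zero_right] at this
            calc ‖x - y‖ ≤ ‖x‖ + ‖y‖ := norm_sub_le _ _
              _ ≤ ‖x‖ + R := by linarith
          have hFe : F (x - y) = |Real.log ‖x - y‖| := by
            rw [hF, Set.indicator_of_mem (by simpa [mem_closedBall, dist_zero_right] using h1)]
          rw [abs_mul, hFe, mul_comm C]
          exact mul_le_mul_of_nonneg_left (hC y) (abs_nonneg _)
        · rw [image_eq_zero_of_notMem_tsupport hy]
          simpa using mul_nonneg hC0 (Set.indicator_nonneg (fun _ _ => abs_nonneg _) (x-y))
    _ = C * ∫ y, F (x - y) := integral_const_mul _ _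
    _ = C * Ilog (‖x‖ + R) := by
        rw [integral_sub_left_eq_self F volume x, hF, integral_indicator measurableSet_closedBall]
        rfl


lemma int_inv_smul (t : ℝ) (ht : 0 < t) (f : E2 → ℝ) :
    ∫ x : E2, f (t⁻¹ • x) = (t^(2:ℕ)) * ∫ x, f x := by
  rw [Measure.integral_comp_inv_smul volume f t, finrank_euclideanSpace_fin,
    abs_of_pos (pow_pos ht 2), smul_eq_mul]

lemma fderiv_scale (w : E2 → ℝ) (hw : Differentiable ℝ w) (c t : ℝ) (x : E2) :
    fderiv ℝ (fun x => c * w (t⁻¹ • x)) x = (c * t⁻¹) • fderiv ℝ w (t⁻¹ • x) := by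
  have hL : (fun x : E2 => t⁻¹ • x) = fun x => (t⁻¹ • ContinuousLinearMap.id ℝ E2) x := by
    ext x; simp
  have hdin : DifferentiableAt ℝ (fun x : E2 => w (t⁻¹ • x)) x := by
    rw [show (fun x : E2 => w (t⁻¹ • x)) = w ∘ (fun x : E2 => t⁻¹ • x) from rfl, hL]
    exact (hw _).comp x ((t⁻¹ • ContinuousLinearMap.id ℝ E2).differentiableAt)
  rw [fderiv_const_mul hdin c]
  have : fderiv ℝ (fun x : E2 => w (t⁻¹ • x)) x
      = (fderiv ℝ w (t⁻¹ • x)).comp (t⁻¹ • ContinuousLinearMap.id ℝ E2) := by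
    rw [show (fun x : E2 => w (t⁻¹ • x)) = w ∘ (fun x : E2 => t⁻¹ • x) from rfl, hL]
    rw [fderiv_comp x (by simpa using hw _) ((t⁻¹ • ContinuousLinearMap.id ℝ E2).differentiableAt),
      ContinuousLinearMap.fderiv]
    simp
  rw [this, ContinuousLinearMap.comp_smul, ContinuousLinearMap.comp_id, smul_smul]

end Stmt15Aux

open Stmt15Aux

set_option maxHeartbeats 1000000 in
theorem stmt15 (α r p q : ℝ) (hα : 0 < α) (hr : (α - 2) / 2 < r) (hp : 2 < p)
    (hq : 0 < q)
    (w : EuclideanSpace ℝ (Fin 2) → ℝ) (hw : ContDiff ℝ (⊤ : ℕ∞) w)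
    (hsupp : HasCompactSupport w) (hne : w ≠ 0)
    (Jα : (EuclideanSpace ℝ (Fin 2) → ℝ) → ℝ)
    (hJ : ∀ u, Jα u = (1/2) * (∫ x, ‖fderiv ℝ u x‖ ^ 2)
        + (1/2) * (∫ x, (1 + ‖x‖ ^ α) * u x ^ 2)
        - (q/4) * V₀ u - (1/p) * ∫ x, |u x| ^ p) :
    (∀ t : ℝ, 0 < t →
      Jα (fun x => t ^ r * w (t⁻¹ • x)) =
        t ^ (2*r) / 2 * (∫ x, ‖fderiv ℝ w x‖ ^ 2)
        + t ^ (2*r+2) / 2 * (∫ x, (1 + t ^ α * ‖x‖ ^ α) * w x ^ 2)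
        - (q * t ^ (4*r+4) * Real.log t) / (8 * Real.pi) * (∫ x, w x ^ 2) ^ 2
        - (q * t ^ (4*r+4) / 4) * V₀ w
        - t ^ (p*r+2) / p * ∫ x, |w x| ^ p) ∧
    Filter.Tendsto (fun t : ℝ => Jα (fun x => t ^ r * w (t⁻¹ • x)))
      Filter.atTop Filter.atBot := by
  have hwc : Continuous w := hw.continuous
  have hdw : Differentiable ℝ w := hw.differentiable (by simp)
  -- the squared function
  set g : E2 → ℝ := fun z => w z ^ 2 with hgdef
  have hgc : Continuous g := hwc.pow 2
  have hgs : HasCompactSupport g := hsupp.comp_left (g := fun s : ℝ => s ^ 2) (by simp)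
  obtain ⟨R0, hR0⟩ := hsupp.isBounded.subset_closedBall 0
  set R := max R0 0 with hRdef
  have hRnn : 0 ≤ R := le_max_right _ _
  have hR : tsupport w ⊆ closedBall 0 R :=
    hR0.trans (closedBall_subset_closedBall (le_max_left _ _))
  have hgR : tsupport g ⊆ closedBall 0 R := by
    have hss : Function.support g ⊆ Function.support w := by
      intro y hy
      simp only [Function.mem_support, hgdef] at hy ⊢
      exact fun h => hy (by rw [h]; ring)
    exact (closure_mono hss).trans hR
  obtain ⟨C, hC⟩ := hgs.exists_bound_of_continuous hgc
  have hC' : ∀ y, |g y| ≤ C := fun y => by simpa [Real.norm_eq_abs] using hC y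
  have hC0 : 0 ≤ C := le_trans (abs_nonneg _) (hC' 0)
  have hgint : Integrable g := hgc.integrable_of_hasCompactSupport hgs
  set Φ : E2 → ℝ := fun x => ∫ y, Real.log ‖x - y‖ * w y ^ 2 with hΦdef
  have hΦint : ∀ x, Integrable (fun y => Real.log ‖x - y‖ * w y ^ 2) := fun x =>
    log_mul_integrable hgc hgs hgR hC' x
  have hΦbd : ∀ x, |Φ x| ≤ C * Ilog (‖x‖ + R) := fun x =>
    log_mul_bound hgc hgs hgR hC' x
  have hΦm : AEStronglyMeasurable Φ (volume : Measure E2) := by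
    apply AEStronglyMeasurable.integral_prod_right'
      (f := fun z : E2 × E2 => Real.log ‖z.1 - z.2‖ * w z.2 ^ 2)
    exact ((Real.measurable_log.comp ((measurable_fst.sub measurable_snd).norm)).mul
      ((hwc.measurable.comp measurable_snd).pow_const 2)).aestronglyMeasurable
  -- integrability of w² * Φ
  have hwΦint : Integrable (fun x => w x ^ 2 * Φ x) := by
    have hdom : Integrable
        ((closedBall (0:E2) R).indicator (fun _ => C * (C * Ilog (R + R)))) :=
      (integrableOn_const measure_closedBall_lt_top.ne).integrable_indicator
        measurableSet_closedBall
    refine hdom.mono' ((hwc.measurable.pow_const 2).aestronglyMeasurable.mul hΦm) ?_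
    filter_upwards with x
    rw [Real.norm_eq_abs, abs_mul]
    by_cases hx : x ∈ tsupport w
    · have hxR : ‖x‖ ≤ R := by simpa [mem_closedBall, dist_zero_right] using hR hx
      have h1 : |w x ^ 2| * |Φ x| ≤ C * (C * Ilog (R + R)) := by
        have h2 : |Φ x| ≤ C * Ilog (R + R) :=
          (hΦbd x).trans (mul_le_mul_of_nonneg_left (Ilog_mono (by linarith)) hC0)
        exact mul_le_mul (hC' x) h2 (abs_nonneg _) hC0
      rw [Set.indicator_of_mem (by simpa [mem_closedBall, dist_zero_right] using hxR)]
      exact h1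
    · rw [image_eq_zero_of_notMem_tsupport hx]
      have : (0:ℝ) ≤ C * (C * Ilog (R + R)) :=
        mul_nonneg hC0 (mul_nonneg hC0 (Ilog_nonneg _))
      simpa using Set.indicator_nonneg (fun _ _ => this) x
  -- double integral identity
  have hdouble : (∫ x, w x ^ 2 * Φ x) = ∫ x, ∫ y, Real.log ‖x - y‖ * w x ^ 2 * w y ^ 2 := by
    congr 1
    funext x
    rw [hΦdef, ← integral_const_mul]
    congr 1; funext y; ring
  -- main equality for each t > 0
  have hmain : ∀ t : ℝ, 0 < t →
      Jα (fun x => t ^ r * w (t⁻¹ • x)) =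
        t ^ (2*r) / 2 * (∫ x, ‖fderiv ℝ w x‖ ^ 2)
        + t ^ (2*r+2) / 2 * (∫ x, (1 + t ^ α * ‖x‖ ^ α) * w x ^ 2)
        - (q * t ^ (4*r+4) * Real.log t) / (8 * Real.pi) * (∫ x, w x ^ 2) ^ 2
        - (q * t ^ (4*r+4) / 4) * V₀ w
        - t ^ (p*r+2) / p * ∫ x, |w x| ^ p := by
    intro t ht
    have htr : (0:ℝ) < t ^ r := Real.rpow_pos_of_pos ht r
    have hts : ∀ x : E2, t • t⁻¹ • x = x := fun x => by
      rw [smul_smul, mul_inv_cancel₀ ht.ne', one_smul]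
    -- rpow arithmetic
    have e2r : t ^ (2*r) = (t ^ r) ^ (2:ℕ) := by
      rw [← Real.rpow_natCast (t ^ r) 2, ← Real.rpow_mul ht.le]
      norm_num [mul_comm]
    have e2r2 : t ^ (2*r+2) = (t ^ r) ^ (2:ℕ) * t ^ (2:ℕ) := by
      rw [Real.rpow_add ht, e2r]
      congr 1
      rw [← Real.rpow_natCast t 2]
      norm_num
    have e4r4 : t ^ (4*r+4) = t ^ (2:ℕ) * ((t^r)^(2:ℕ) * ((t^r)^(2:ℕ) * (t^(2:ℕ) * 1))) := by
      rw [show (4*r+4 : ℝ) = (2*r+2) + (2*r+2) by ring, Real.rpow_add ht, e2r2]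
      ring
    have epr2 : t ^ (p*r+2) = (t ^ r) ^ p * t ^ (2:ℕ) := by
      rw [Real.rpow_add ht, show p*r = r*p by ring, Real.rpow_mul ht.le]
      congr 1
      rw [← Real.rpow_natCast t 2]
      norm_num
    -- Term 1: gradient
    have hT1 : (∫ x, ‖fderiv ℝ (fun x : E2 => t ^ r * w (t⁻¹ • x)) x‖ ^ 2)
        = t ^ (2*r) * ∫ x, ‖fderiv ℝ w x‖ ^ 2 := by
      have h1 : ∀ x : E2, ‖fderiv ℝ (fun x : E2 => t ^ r * w (t⁻¹ • x)) x‖ ^ 2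
          = (t ^ r * t⁻¹)^(2:ℕ) * ‖fderiv ℝ w (t⁻¹ • x)‖ ^ 2 := by
        intro x
        rw [fderiv_scale w hdw (t ^ r) t x, norm_smul, Real.norm_eq_abs,
          abs_of_pos (by positivity), mul_pow]
      simp only [h1]
      have base := int_inv_smul t ht (fun z => ‖fderiv ℝ w z‖ ^ 2)
      rw [integral_const_mul, base, e2r]
      have : (t ^ r * t⁻¹) ^ (2:ℕ) * (t ^ (2:ℕ) * ∫ x, ‖fderiv ℝ w x‖ ^ 2)
          = ((t ^ r)^(2:ℕ) * ((t⁻¹)^(2:ℕ) * t ^ (2:ℕ))) * ∫ x, ‖fderiv ℝ w x‖ ^ 2 := by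
        ring
      rw [this, inv_pow, inv_mul_cancel₀ (by positivity), mul_one]
    -- Term 2: potential
    have hT2 : (∫ x, (1 + ‖x‖ ^ α) * (t ^ r * w (t⁻¹ • x)) ^ 2)
        = t ^ (2*r+2) * ∫ x, (1 + t ^ α * ‖x‖ ^ α) * w x ^ 2 := by
      have base := int_inv_smul t ht (fun z : E2 => (1 + ‖t • z‖ ^ α) * w z ^ 2)
      simp only [hts] at base
      have h1 : ∀ x : E2, (1 + ‖x‖ ^ α) * (t ^ r * w (t⁻¹ • x)) ^ 2
          = (t ^ r)^(2:ℕ) * ((1 + ‖x‖ ^ α) * w (t⁻¹ • x) ^ 2) := fun x => by ring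
      simp only [h1]
      rw [integral_const_mul, base, e2r2]
      have h2 : ∀ z : E2, (1 + ‖t • z‖ ^ α) * w z ^ 2
          = (1 + t ^ α * ‖z‖ ^ α) * w z ^ 2 := fun z => by
        rw [norm_smul, Real.norm_eq_abs, abs_of_pos ht, Real.mul_rpow ht.le (norm_nonneg _)]
      simp only [h2]
      ring
    -- Term 4: Lp
    have hT4 : (∫ x, |t ^ r * w (t⁻¹ • x)| ^ p)
        = t ^ (p*r+2) * ∫ x, |w x| ^ p := by
      have base := int_inv_smul t ht (fun z : E2 => |w z| ^ p)
      have h1 : ∀ x : E2, |t ^ r * w (t⁻¹ • x)| ^ p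
          = (t ^ r) ^ p * |w (t⁻¹ • x)| ^ p := fun x => by
        rw [abs_mul, abs_of_pos htr, Real.mul_rpow htr.le (abs_nonneg _)]
      simp only [h1]
      rw [integral_const_mul, base, epr2]
      ring
    -- Term 3: V₀
    have hT3 : V₀ (fun x => t ^ r * w (t⁻¹ • x))
        = (1 / (2 * Real.pi)) * (t ^ (4*r+4) *
            (Real.log t * (∫ x, w x ^ 2) ^ 2 + ∫ x, ∫ y, Real.log ‖x - y‖ * w x ^ 2 * w y ^ 2)) := by
      rw [V₀]
      congr 1
      -- outer change of variables
      have hOuter := int_inv_smul t ht (fun x => ∫ y, Real.log ‖t • x - y‖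
        * (t ^ r * w x) ^ 2 * (t ^ r * w (t⁻¹ • y)) ^ 2)
      simp only [hts] at hOuter
      rw [hOuter]
      -- inner computation, pointwise in x
      have hInner : ∀ x : E2, (∫ y, Real.log ‖t • x - y‖ * (t ^ r * w x) ^ 2
              * (t ^ r * w (t⁻¹ • y)) ^ 2)
          = t ^ (2:ℕ) * ((t ^ r * w x) ^ 2 * (t ^ r) ^ (2:ℕ) *
              (Real.log t * (∫ z, w z ^ 2) + Φ x)) := by
        intro x
        have step1 := int_inv_smul t ht
          (fun y => Real.log ‖t • x - t • y‖ * (t ^ r * w x) ^ 2 * (t ^ r * w y) ^ 2)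
        simp only [hts] at step1
        rw [step1]
        congr 1
        have hnorm : ∀ y : E2, ‖t • x - t • y‖ = t * ‖x - y‖ := fun y => by
          rw [← smul_sub, norm_smul, Real.norm_eq_abs, abs_of_pos ht]
        have hae : ∀ᵐ y : E2, y ≠ x := by
          have h0 : volume ({x} : Set E2) = 0 := measure_singleton x
          filter_upwards [MeasureTheory.compl_mem_ae_iff.2 h0] with y hy
          simpa using hy
        have step2 : (∫ y, Real.log ‖t • x - t • y‖ * (t ^ r * w x) ^ 2 * (t ^ r * w y) ^ 2)
            = ∫ y, (t ^ r * w x) ^ 2 * (t ^ r) ^ (2:ℕ) *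
                (Real.log t * w y ^ 2 + Real.log ‖x - y‖ * w y ^ 2) := by
          apply integral_congr_ae
          filter_upwards [hae] with y hy
          have hxy : ‖x - y‖ ≠ 0 := by
            rw [norm_ne_zero_iff, sub_ne_zero]
            exact Ne.symm hy
          rw [hnorm y, Real.log_mul ht.ne' hxy]
          ring
        rw [step2, integral_const_mul]
        congr 1
        rw [integral_add (hgint.const_mul (Real.log t)) (hΦint x), integral_const_mul]
      simp only [hInner]
      rw [integral_const_mul]
      -- split the outer integral
      have hsplit : (∫ x, (t ^ r * w x) ^ 2 * (t ^ r) ^ (2:ℕ) *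
            (Real.log t * (∫ z, w z ^ 2) + Φ x))
          = (t ^ r) ^ (2:ℕ) * (t ^ r) ^ (2:ℕ) *
            (Real.log t * (∫ z, w z ^ 2) * (∫ z, w z ^ 2) + ∫ x, w x ^ 2 * Φ x) := by
        have h1 : (fun x => (t ^ r * w x) ^ 2 * (t ^ r) ^ (2:ℕ) *
              (Real.log t * (∫ z, w z ^ 2) + Φ x))
            = fun x => ((t ^ r) ^ (2:ℕ) * (t ^ r) ^ (2:ℕ)) *
                ((Real.log t * (∫ z, w z ^ 2)) * w x ^ 2 + w x ^ 2 * Φ x) := by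
          funext x; ring
        rw [h1, integral_const_mul,
          integral_add (hgint.const_mul _) hwΦint, integral_const_mul]
      rw [hsplit, hdouble, e4r4]
      ring
    -- combine
    rw [hJ, hT1, hT2, hT3, hT4]
    have hpi : Real.pi ≠ 0 := Real.pi_ne_zero
    simp only [V₀]
    field_simp
    ring
  refine ⟨hmain, ?_⟩
  -- Part 2: the limit
  set A := ∫ x, ‖fderiv ℝ w x‖ ^ 2 with hAdef
  set B := ∫ x, w x ^ 2 with hBdef
  set Cα := ∫ x : E2, ‖x‖ ^ α * w x ^ 2 with hCadef
  set F := ∫ x, |w x| ^ p with hFdef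
  have hA0 : 0 ≤ A := integral_nonneg fun x => by positivity
  have hCa0 : 0 ≤ Cα := integral_nonneg fun x => by positivity
  have hF0 : 0 ≤ F := integral_nonneg fun x => by positivity
  have hB0 : 0 < B := by
    rcases (integral_nonneg (f := fun x : E2 => w x ^ 2) (fun x => by positivity)).lt_or_eq
      with h | h
    · exact h
    · exfalso
      have hae : g =ᵐ[volume] (0 : E2 → ℝ) :=
        (integral_eq_zero_iff_of_nonneg (fun x => by positivity) hgint).1 h.symm
      have : g = 0 := (Continuous.ae_eq_iff_eq volume hgc continuous_const).1 hae
      apply hne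
      funext x
      have := congrFun this x
      simpa [hgdef, pow_eq_zero_iff] using this
  have hCaint : Integrable (fun x : E2 => ‖x‖ ^ α * w x ^ 2) := by
    apply Continuous.integrable_of_hasCompactSupport
    · exact (continuous_norm.rpow_const fun x => Or.inr hα.le).mul hgc
    · exact hgs.mul_left
  have hr' : α < 2 * r + 2 := by linarith [hr]
  have hrm1 : -1 < r := by linarith
  set K := A/2 + B/2 + Cα/2 + |q * V₀ w / 4| with hKdef
  set D := q * B ^ 2 / (8 * Real.pi) with hDdef
  have hD : 0 < D := by
    rw [hDdef]
    positivity
  have hK1D : 0 ≤ (K + 1) / D ∨ True := Or.inr trivial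
  refine Filter.tendsto_atBot_mono' Filter.atTop
    (f₁ := fun t : ℝ => -(t ^ (4*r+4))) ?_ ?_
  · filter_upwards [Filter.eventually_ge_atTop (1:ℝ),
      Filter.eventually_ge_atTop (Real.exp ((K+1)/D))] with t ht1 hte
    have ht0 : (0:ℝ) < t := lt_of_lt_of_le one_pos ht1
    rw [hmain t ht0]
    have hsplitI : (∫ x, (1 + t ^ α * ‖x‖ ^ α) * w x ^ 2) = B + t ^ α * Cα := by
      have h1 : ∀ x : E2, (1 + t ^ α * ‖x‖ ^ α) * w x ^ 2
          = w x ^ 2 + t ^ α * (‖x‖ ^ α * w x ^ 2) := fun x => by ring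
      simp only [h1]
      rw [integral_add hgint (hCaint.const_mul _), integral_const_mul]
    rw [hsplitI]
    set X := t ^ (4*r+4) with hXdef
    have hX0 : (0:ℝ) < X := Real.rpow_pos_of_pos ht0 _
    have h1 : t ^ (2*r) ≤ X := Real.rpow_le_rpow_of_exponent_le ht1 (by linarith)
    have h2 : t ^ (2*r+2) ≤ X := Real.rpow_le_rpow_of_exponent_le ht1 (by linarith)
    have h3 : t ^ (2*r+2) * t ^ α ≤ X := by
      rw [← Real.rpow_add ht0]
      exact Real.rpow_le_rpow_of_exponent_le ht1 (by linarith)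
    have h4 : (0:ℝ) < t ^ (p*r+2) := Real.rpow_pos_of_pos ht0 _
    have hlog : K + 1 ≤ D * Real.log t := by
      have : (K+1)/D ≤ Real.log t :=
        (Real.le_log_iff_exp_le ht0).2 hte
      calc K + 1 = D * ((K+1)/D) := by field_simp
        _ ≤ D * Real.log t := by
          exact mul_le_mul_of_nonneg_left this hD.le
    -- main inequality
    have hstep1 : t ^ (2*r) / 2 * A + t ^ (2*r+2) / 2 * (B + t ^ α * Cα)
        - q * X * Real.log t / (8 * Real.pi) * B ^ 2
        - q * X / 4 * V₀ w - t ^ (p*r+2) / p * F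
        ≤ K * X - D * Real.log t * X := by
      have f1 : t ^ (2*r) * A ≤ X * A := mul_le_mul_of_nonneg_right h1 hA0
      have f2 : t ^ (2*r+2) * B ≤ X * B := mul_le_mul_of_nonneg_right h2 hB0.le
      have f3 : t ^ (2*r+2) * t ^ α * Cα ≤ X * Cα := mul_le_mul_of_nonneg_right h3 hCa0
      have f4 : 0 ≤ t ^ (p*r+2) / p * F := by positivity
      have f5 : -(q * V₀ w / 4) * X ≤ |q * V₀ w / 4| * X :=
        mul_le_mul_of_nonneg_right (neg_le_abs _) hX0.le
      have hDX : q * X * Real.log t / (8 * Real.pi) * B ^ 2 = D * Real.log t * X := by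
        rw [hDdef]; field_simp
      rw [hDX, hKdef]
      nlinarith [f1, f2, f3, f4, f5]
    have hstep2 : K * X - D * Real.log t * X ≤ -X := by
      nlinarith [hlog, hX0.le, mul_le_mul_of_nonneg_right hlog hX0.le]
    calc t ^ (2*r) / 2 * A + t ^ (2*r+2) / 2 * (B + t ^ α * Cα)
          - q * t ^ (4*r+4) * Real.log t / (8 * Real.pi) * B ^ 2
          - q * t ^ (4*r+4) / 4 * V₀ w - t ^ (p*r+2) / p * F
        ≤ K * X - D * Real.log t * X := hstep1
      _ ≤ -X := hstep2
  · have h4r4 : (0:ℝ) < 4*r+4 := by linarith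
    exact (Filter.tendsto_neg_atBot_iff.mpr (tendsto_rpow_atTop h4r4))
end
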